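/- Let A be a commutative ℤ-graded ring whose non-negative part A_{≥0} is generated as an A₀-algebra by homogeneous elements f₁,…,f_p of positive degrees d₁,…,d_p. Let d > 0 be a positive integer divisible by each dᵢ. Then for any integer N > dp − (d₁ + ⋯ + d_p), one has A_N = A_d · A_{N−d}, i.e., every element of A_N is a sum of products of an element of A_d with an element of A_{N−d}. -/

import Mathlib

/-!
Statement 1: If the non-negative part of a commutative ℤ-graded ring `A` is generated,
as an `A₀`-algebra, by homogeneous elements `f₁, …, f_p` of positive degrees `d₁, …, d_p`,
and `d > 0` is divisible by each `dᵢ`, then for every `N > d·p − (d₁ + ⋯ + d_p)` we have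
`A_N = A_d · A_{N−d}`, i.e. every element of `A_N` is a sum of products of an element of
`A_d` with an element of `A_{N−d}`.
-/

theorem graded_piece_eq_mul_of_gt
    {A : Type*} [CommRing A] (𝒜 : ℤ → AddSubgroup A) [GradedRing 𝒜]
    (p : ℕ) (f : Fin p → A) (deg : Fin p → ℤ)
    (hdegpos : ∀ i, 0 < deg i)
    (hf : ∀ i, f i ∈ 𝒜 (deg i))
    -- `A_{≥0}` is generated over `A₀` by the `fᵢ`:
    (hgen : ∀ n : ℤ, 0 ≤ n → ∀ a ∈ 𝒜 n,
      a ∈ Subring.closure ((𝒜 0 : Set A) ∪ Set.range f))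
    (d : ℤ) (hd : 0 < d) (hdvd : ∀ i, deg i ∣ d)
    (N : ℤ) (hN : d * p - ∑ i, deg i < N) :
    -- `A_N = A_d · A_{N-d}`:
    ∀ a ∈ 𝒜 N, a ∈ AddSubgroup.closure
      {x : A | ∃ u ∈ 𝒜 d, ∃ v ∈ 𝒜 (N - d), x = u * v} := by
  classical
  intro a haN
  set T : Set A := {x : A | ∃ u ∈ 𝒜 d, ∃ v ∈ 𝒜 (N - d), x = u * v} with hT
  set M : Set A := {x : A | ∃ c ∈ 𝒜 (0 : ℤ), ∃ e : Fin p → ℕ,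
      x = c * ∏ i, f i ^ e i} with hM
  -- basic degree facts
  have hdle : ∀ i, deg i ≤ d := fun i => Int.le_of_dvd hd (hdvd i)
  have hN0 : 0 < N := by
    refine lt_of_le_of_lt ?_ hN
    have : (0:ℤ) ≤ ∑ i : Fin p, (d - deg i) :=
      Finset.sum_nonneg fun i _ => sub_nonneg.mpr (hdle i)
    have hs : ∑ i : Fin p, (d - deg i) = d * p - ∑ i, deg i := by
      rw [Finset.sum_sub_distrib, Finset.sum_const, Finset.card_univ,
        Fintype.card_fin, nsmul_eq_mul, mul_comm]
    linarith [hs ▸ this]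
  -- product of powers of the f's is homogeneous
  have prodmem : ∀ (e : Fin p → ℕ) (s : Finset (Fin p)),
      (∏ j ∈ s, f j ^ e j) ∈ 𝒜 (∑ j ∈ s, (e j : ℤ) * deg j) := by
    intro e s
    have := SetLike.prod_pow_mem_graded 𝒜 deg f e (F := s) (fun k _ => hf k)
    simpa [nsmul_eq_mul] using this
  -- monomials are closed under multiplication
  have Mmul : ∀ x ∈ M, ∀ y ∈ M, x * y ∈ M := by
    rintro x ⟨c, hc, e, rfl⟩ y ⟨c', hc', e', rfl⟩
    refine ⟨c * c', by simpa using SetLike.mul_mem_graded hc hc', e + e', ?_⟩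
    simp only [Pi.add_apply, pow_add, Finset.prod_mul_distrib]
    ring
  have clmul : ∀ x ∈ AddSubgroup.closure M, ∀ y ∈ AddSubgroup.closure M,
      x * y ∈ AddSubgroup.closure M := by
    intro x hx
    induction hx using AddSubgroup.closure_induction with
    | mem x hxM =>
      intro y hy
      induction hy using AddSubgroup.closure_induction with
      | mem y hyM => exact AddSubgroup.subset_closure (Mmul x hxM y hyM)
      | zero => simpa using zero_mem _
      | add y z _ _ hy hz => rw [mul_add]; exact add_mem hy hz
      | neg y _ hy => rw [mul_neg]; exact neg_mem hy
    | zero => intro y hy; simpa using zero_mem _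
    | add x z _ _ hx hz => intro y hy; rw [add_mul]; exact add_mem (hx y hy) (hz y hy)
    | neg x _ hx => intro y hy; rw [neg_mul]; exact neg_mem (hx y hy)
  -- step 1 : a is in the additive closure of monomials
  have h1 : ∀ x ∈ Subring.closure ((𝒜 0 : Set A) ∪ Set.range f),
      x ∈ AddSubgroup.closure M := by
    intro x hx
    induction hx using Subring.closure_induction with
    | mem x hx =>
      rcases hx with hx | ⟨i, rfl⟩
      · exact AddSubgroup.subset_closure ⟨x, hx, 0, by simp⟩
      · refine AddSubgroup.subset_closure ⟨1, SetLike.one_mem_graded 𝒜,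
          Pi.single i 1, ?_⟩
        rw [one_mul, Finset.prod_eq_single i (fun j _ hj => by
          simp [Pi.single_apply, hj]) (by simp)]
        simp
    | zero => exact zero_mem _
    | one => exact AddSubgroup.subset_closure ⟨1, SetLike.one_mem_graded 𝒜, 0, by simp⟩
    | add x y _ _ hx hy => exact add_mem hx hy
    | neg x _ hx => exact neg_mem hx
    | mul x y hx' hy' hx hy => exact clmul x hx y hy
  -- step 2 : the degree-N component of anything in closure M lies in closure T
  have h2 : ∀ x ∈ AddSubgroup.closure M,
      ((DirectSum.decompose 𝒜 x N : 𝒜 N) : A) ∈ AddSubgroup.closure T := by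
    intro x hx
    induction hx using AddSubgroup.closure_induction with
    | mem x hxM =>
      obtain ⟨c, hc, e, rfl⟩ := hxM
      have hDmem : c * ∏ i, f i ^ e i ∈ 𝒜 (∑ j, (e j : ℤ) * deg j) := by
        simpa using SetLike.mul_mem_graded hc (prodmem e Finset.univ)
      by_cases hD : (∑ j, (e j : ℤ) * deg j) = N
      · rw [DirectSum.decompose_of_mem_same 𝒜 (hD ▸ hDmem)]
        -- pigeonhole: some i with d < (e i + 1) * deg i
        have hsum : ∑ _i : Fin p, d < ∑ i, ((e i : ℤ) + 1) * deg i := by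
          have : ∑ i, ((e i : ℤ) + 1) * deg i
              = (∑ j, (e j : ℤ) * deg j) + ∑ i, deg i := by
            rw [← Finset.sum_add_distrib]; congr 1; ext i; ring
          rw [this, hD, Finset.sum_const, Finset.card_univ, Fintype.card_fin,
            nsmul_eq_mul, mul_comm]
          linarith
        obtain ⟨i, -, hi⟩ := Finset.exists_lt_of_sum_lt hsum
        set k : ℕ := (d / deg i).toNat with hk
        have hkd : (k : ℤ) * deg i = d := by
          rw [hk, Int.toNat_of_nonneg (Int.ediv_nonneg hd.le (hdegpos i).le),
            Int.ediv_mul_cancel (hdvd i)]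
        have hke : k ≤ e i := by
          have : (k : ℤ) * deg i < ((e i : ℤ) + 1) * deg i := hkd ▸ hi
          have := lt_of_mul_lt_mul_right this (hdegpos i).le
          exact_mod_cast Int.lt_add_one_iff.mp this
        refine AddSubgroup.subset_closure ?_
        refine ⟨f i ^ k, by simpa [nsmul_eq_mul, hkd] using
          SetLike.pow_mem_graded k (hf i), c * (f i ^ (e i - k) *
          ∏ j ∈ Finset.univ.erase i, f j ^ e j), ?_, ?_⟩
        · have hmem : c * (f i ^ (e i - k) * ∏ j ∈ Finset.univ.erase i, f j ^ e j)
              ∈ 𝒜 (0 + (((e i - k : ℕ) : ℤ) * deg i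
                + ∑ j ∈ Finset.univ.erase i, (e j : ℤ) * deg j)) :=
            SetLike.mul_mem_graded hc (SetLike.mul_mem_graded
              (by simpa [nsmul_eq_mul] using SetLike.pow_mem_graded (e i - k) (hf i))
              (prodmem e _))
          have heq : (0 + (((e i - k : ℕ) : ℤ) * deg i
                + ∑ j ∈ Finset.univ.erase i, (e j : ℤ) * deg j)) = N - d := by
            rw [Finset.sum_erase_eq_sub (Finset.mem_univ i), hD,
              Nat.cast_sub hke, ← hkd]
            ring
          exact heq ▸ hmem
        · rw [← Finset.mul_prod_erase Finset.univ _ (Finset.mem_univ i)]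
          have hpw : f i ^ e i = f i ^ k * f i ^ (e i - k) := by
            rw [← pow_add, Nat.add_sub_cancel' hke]
          rw [hpw]; ring
      · rw [DirectSum.decompose_of_mem_ne 𝒜 hDmem hD]
        exact zero_mem _
    | zero => simp only [map_zero]; simpa using zero_mem _
    | add x y _ _ hx hy =>
      rw [DirectSum.decompose_add]
      push_cast
      exact add_mem hx hy
    | neg x _ hx =>
      rw [DirectSum.decompose_neg]
      push_cast
      exact neg_mem hx
  have := h2 a (h1 a (hgen N hN0.le a haN))
  rwa [DirectSum.decompose_of_mem_same 𝒜 haN] at this
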